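/- For all j, k ∈ [n−1] and all t ∈ ℝ, the matrix exponential satisfies exp(t · e^{(p)}_{(j,k)}) = I + ((e^{t(δ_{jk} + r_j)} − 1)/(δ_{jk} + r_j)) · e^{(p)}_{(j,k)}, where δ denotes the Kronecker delta and I the n×n identity matrix. -/

import Mathlib

open Matrix

/-- The ratio `r_j := p_j / p_n` for `j ∈ [n-1]`, with the state space `[n]` modeled as
`Fin (m+1)`, the last state `n` as `Fin.last m`, and `[n-1]` as `Fin m` via `Fin.castSucc`. -/
noncomputable def r (m : ℕ) (p : Fin (m + 1) → ℝ) (j : Fin m) : ℝ :=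
  p j.castSucc / p (Fin.last m)

/-- `e^{(p)}_{(j,k)} := (e_j − r_j e_n)(e_k^T − e_n^T)` as an `(m+1) × (m+1)` real matrix. -/
noncomputable def Ep (m : ℕ) (p : Fin (m + 1) → ℝ) (j k : Fin m) :
    Matrix (Fin (m + 1)) (Fin (m + 1)) ℝ :=
  Matrix.vecMulVec
    (fun a => (if a = j.castSucc then (1 : ℝ) else 0) -
      r m p j * (if a = Fin.last m then (1 : ℝ) else 0))
    (fun b => (if b = k.castSucc then (1 : ℝ) else 0) - (if b = Fin.last m then (1 : ℝ) else 0))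


section Aux
open NormedSpace

theorem scalar_sum_aux7 (c : ℝ) (hc : c ≠ 0) :
    ∑' n : ℕ, c ^ n / (Nat.factorial (n + 1)) = (Real.exp c - 1) / c := by
  have hs : Summable fun n : ℕ => c ^ n / (Nat.factorial (n + 1)) := by
    have h := Real.summable_pow_div_factorial c
    have h2 := (h.comp_injective (add_left_injective 1)).mul_left c⁻¹
    refine h2.congr fun n => ?_
    simp only [Function.comp, pow_succ]
    field_simp
  have key : c * ∑' n : ℕ, c ^ n / (Nat.factorial (n + 1)) = Real.exp c - 1 := by
    rw [← tsum_mul_left]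
    have : ∀ n : ℕ, c * (c ^ n / (Nat.factorial (n + 1))) = c ^ (n + 1) / (Nat.factorial (n + 1)) := by
      intro n; rw [pow_succ, mul_comm (c ^ n) c, mul_div_assoc]
    simp_rw [this]
    have hexp : Real.exp c = ∑' n : ℕ, c ^ n / (Nat.factorial n) := by
      rw [Real.exp_eq_exp_ℝ, exp_eq_tsum_div]
    rw [hexp, Summable.tsum_eq_zero_add (Real.summable_pow_div_factorial c)]
    simp
  field_simp [← key]
  linarith [key]

theorem exp_sq_aux7 {A' : Type*} [NormedRing A'] [NormedAlgebra ℝ A'] [CompleteSpace A']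
    {A : A'} {c : ℝ} (hc : c ≠ 0) (hA : A * A = c • A) :
    exp A = 1 + ((Real.exp c - 1) / c) • A := by
  have hpow : ∀ n : ℕ, A ^ (n + 1) = c ^ n • A := by
    intro n
    induction n with
    | zero => simp
    | succ n ih => rw [pow_succ, ih, smul_mul_assoc, hA, smul_smul, pow_succ]
  rw [exp_eq_tsum ℝ]
  dsimp only
  rw [Summable.tsum_eq_zero_add (expSeries_summable' (𝕂 := ℝ) A)]
  simp only [pow_zero, Nat.factorial_zero, Nat.cast_one, inv_one, one_smul]
  congr 1
  have h1 : ∀ n : ℕ, ((Nat.factorial (n + 1) : ℝ))⁻¹ • A ^ (n + 1)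
      = (c ^ n / (Nat.factorial (n + 1))) • A := by
    intro n
    rw [hpow, smul_smul, div_eq_mul_inv, mul_comm]
  simp_rw [h1]
  have hs : Summable fun n : ℕ => c ^ n / (Nat.factorial (n + 1) : ℝ) := by
    have h := Real.summable_pow_div_factorial c
    have h2 := (h.comp_injective (add_left_injective 1)).mul_left c⁻¹
    refine h2.congr fun n => ?_
    simp only [Function.comp, pow_succ]
    field_simp
  rw [Summable.tsum_smul_const hs, scalar_sum_aux7 c hc]

end Aux

open NormedSpace in
/-- `exp(t · e^{(p)}_{(j,k)}) = I + ((e^{t(δ_{jk} + r_j)} − 1)/(δ_{jk} + r_j)) ·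
e^{(p)}_{(j,k)}`. -/
theorem stmt7 (m : ℕ) (hm : 1 ≤ m) (p : Fin (m + 1) → ℝ)
    (hp : ∀ a, 0 < p a) (hsum : ∑ a, p a = 1) (j k : Fin m) (t : ℝ) :
    exp (t • Ep m p j k) =
      (1 : Matrix (Fin (m + 1)) (Fin (m + 1)) ℝ) +
        ((Real.exp (t * ((if j = k then (1 : ℝ) else 0) + r m p j)) - 1) /
            ((if j = k then (1 : ℝ) else 0) + r m p j)) • Ep m p j k := by
  set c : ℝ := (if j = k then (1 : ℝ) else 0) + r m p j with hc_def
  have hr : 0 < r m p j := div_pos (hp _) (hp _)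
  have hc : 0 < c := by
    rcases eq_or_ne j k with h | h <;> simp [hc_def, h, hr] <;> linarith [h ▸ hr]
  set u : Fin (m + 1) → ℝ := fun a => (if a = j.castSucc then (1 : ℝ) else 0) -
      r m p j * (if a = Fin.last m then (1 : ℝ) else 0) with hu
  set v : Fin (m + 1) → ℝ := fun b => (if b = k.castSucc then (1 : ℝ) else 0) -
      (if b = Fin.last m then (1 : ℝ) else 0) with hv
  have hdot : ∑ x : Fin (m + 1), v x * u x = c := by
    have h1 : (Fin.castSucc k : Fin (m + 1)) ≠ Fin.last m := (Fin.castSucc_lt_last k).ne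
    have h2 : (Fin.castSucc j : Fin (m + 1)) ≠ Fin.last m := (Fin.castSucc_lt_last j).ne
    simp only [hu, hv, sub_mul, mul_sub, Finset.sum_sub_distrib, ite_mul, mul_ite, one_mul,
      mul_one, zero_mul, mul_zero, Finset.sum_ite_eq', Finset.mem_univ, if_true]
    simp [h1, h2, hc_def, Fin.castSucc_inj, eq_comm]
  have hmul : Ep m p j k * Ep m p j k = c • Ep m p j k := by
    ext a b
    simp only [Ep, vecMulVec_apply, mul_apply, Matrix.smul_apply, smul_eq_mul, ← hu, ← hv]
    calc ∑ x, (u a * v x) * (u x * v b) = ∑ x, (u a * v b) * (v x * u x) := by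
          refine Finset.sum_congr rfl fun x _ => by ring
      _ = (u a * v b) * c := by rw [← Finset.mul_sum, hdot]
      _ = c * (u a * v b) := by ring
  rcases eq_or_ne t 0 with rfl | ht
  · simp [exp_zero]
  · letI : SeminormedRing (Matrix (Fin (m + 1)) (Fin (m + 1)) ℝ) := Matrix.linftyOpSemiNormedRing
    letI : NormedRing (Matrix (Fin (m + 1)) (Fin (m + 1)) ℝ) := Matrix.linftyOpNormedRing
    letI : NormedAlgebra ℝ (Matrix (Fin (m + 1)) (Fin (m + 1)) ℝ) := Matrix.linftyOpNormedAlgebra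
    have htc : t * c ≠ 0 := mul_ne_zero ht hc.ne'
    have hA : (t • Ep m p j k) * (t • Ep m p j k) = (t * c) • (t • Ep m p j k) := by
      rw [smul_mul_assoc, mul_smul_comm, hmul, smul_smul, smul_smul, smul_smul]
      ring_nf
    rw [show exp (t • Ep m p j k) = _ from exp_sq_aux7 htc hA, smul_smul]
    congr 2
    field_simp
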